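/- Let (X, μ) be a measure space, let H = L²_ℂ(X, μ), and let (φₙ)_{n∈ℕ} be a frame for H with lower frame bound A and upper frame bound B. Then the family of vectors Φₙ⁻ = (1/√2)·(φₙ, −conj φₙ) and Φₙ⁺ = (1/√2)·(φₙ, conj φₙ), n ∈ ℕ, is a frame for the Hilbert direct sum H ⊕ H with the same frame bounds A and B; that is, for all f₁, f₂ ∈ H, A·(‖f₁‖² + ‖f₂‖²) ≤ Σ_{n∈ℕ} ( |⟨Φₙ⁻, (f₁,f₂)⟩|² + |⟨Φₙ⁺, (f₁,f₂)⟩|² ) ≤ B·(‖f₁‖² + ‖f₂‖²). -/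

import Mathlib

open MeasureTheory

/-- Pointwise complex conjugation on `L²_ℂ(X, μ)`. -/
noncomputable def lpConj {X : Type*} [MeasurableSpace X] {μ : Measure X} (f : Lp ℂ 2 μ) :
    Lp ℂ 2 μ :=
  ((starL' ℝ : ℂ ≃L[ℝ] ℂ).toContinuousLinearMap).compLp f

section AuxLpConj

variable {X : Type*} [MeasurableSpace X] {μ : Measure X}

lemma lpConj_ae (f : Lp ℂ 2 μ) : lpConj f =ᵐ[μ] fun a => starRingEnd ℂ (f a) :=
  ContinuousLinearMap.coeFn_compLp' _ f

lemma lpConj_lpConj (f : Lp ℂ 2 μ) : lpConj (lpConj f) = f := by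
  ext1
  filter_upwards [lpConj_ae (lpConj f), lpConj_ae f] with a h1 h2
  simp [h1, h2]

lemma norm_lpConj (f : Lp ℂ 2 μ) : ‖lpConj f‖ = ‖f‖ := by
  have key : ∀ g : Lp ℂ 2 μ, ‖lpConj g‖ ≤ ‖g‖ := by
    intro g
    have := ContinuousLinearMap.norm_compLp_le ((starL' ℝ : ℂ ≃L[ℝ] ℂ).toContinuousLinearMap) g
    have hn : ‖((starL' ℝ : ℂ ≃L[ℝ] ℂ).toContinuousLinearMap)‖ ≤ 1 := by
      apply ContinuousLinearMap.opNorm_le_bound _ zero_le_one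
      intro x; simp
    calc ‖lpConj g‖ ≤ _ * ‖g‖ := this
    _ ≤ 1 * ‖g‖ := by gcongr
    _ = ‖g‖ := one_mul _
  refine le_antisymm (key f) ?_
  have := key (lpConj f)
  rwa [lpConj_lpConj] at this

lemma inner_lpConj (u v : Lp ℂ 2 μ) :
    (inner ℂ (lpConj u) v : ℂ) = starRingEnd ℂ (inner ℂ u (lpConj v) : ℂ) := by
  rw [MeasureTheory.L2.inner_def, MeasureTheory.L2.inner_def, ← integral_conj]
  apply integral_congr_ae
  filter_upwards [lpConj_ae u, lpConj_ae v] with a h1 h2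
  simp [h1, h2, RCLike.inner_apply, mul_comm]

lemma key_term (φn f₁ f₂ : Lp ℂ 2 μ) :
    ‖(inner ℂ ((Real.sqrt 2)⁻¹ • (WithLp.equiv 2 (Lp ℂ 2 μ × Lp ℂ 2 μ)).symm (φn, -lpConj φn))
        ((WithLp.equiv 2 (Lp ℂ 2 μ × Lp ℂ 2 μ)).symm (f₁, f₂)) : ℂ)‖ ^ 2 +
    ‖(inner ℂ ((Real.sqrt 2)⁻¹ • (WithLp.equiv 2 (Lp ℂ 2 μ × Lp ℂ 2 μ)).symm (φn, lpConj φn))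
        ((WithLp.equiv 2 (Lp ℂ 2 μ × Lp ℂ 2 μ)).symm (f₁, f₂)) : ℂ)‖ ^ 2
    = ‖(inner ℂ φn f₁ : ℂ)‖ ^ 2 + ‖(inner ℂ φn (lpConj f₂) : ℂ)‖ ^ 2 := by
  set a : ℂ := inner ℂ φn f₁ with ha
  set b : ℂ := inner ℂ φn (lpConj f₂) with hb
  have h1 : (inner ℂ ((WithLp.equiv 2 (Lp ℂ 2 μ × Lp ℂ 2 μ)).symm (φn, -lpConj φn))
      ((WithLp.equiv 2 (Lp ℂ 2 μ × Lp ℂ 2 μ)).symm (f₁, f₂)) : ℂ) = a - starRingEnd ℂ b := by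
    rw [WithLp.prod_inner_apply]
    simp only [WithLp.equiv_symm_apply, WithLp.toLp_fst, WithLp.toLp_snd, inner_neg_left, inner_lpConj]
    ring
  have h2 : (inner ℂ ((WithLp.equiv 2 (Lp ℂ 2 μ × Lp ℂ 2 μ)).symm (φn, lpConj φn))
      ((WithLp.equiv 2 (Lp ℂ 2 μ × Lp ℂ 2 μ)).symm (f₁, f₂)) : ℂ) = a + starRingEnd ℂ b := by
    rw [WithLp.prod_inner_apply]
    simp only [WithLp.equiv_symm_apply, WithLp.toLp_fst, WithLp.toLp_snd, inner_lpConj]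
    rfl
  rw [RCLike.real_smul_eq_coe_smul (K := ℂ), RCLike.real_smul_eq_coe_smul (K := ℂ),
    inner_smul_left, inner_smul_left, h1, h2]
  rw [norm_mul, norm_mul, mul_pow, mul_pow]
  simp only [RCLike.norm_conj, RCLike.norm_ofReal]
  have hcn : |(Real.sqrt 2)⁻¹| ^ 2 = 2⁻¹ := by
    rw [abs_of_nonneg (by positivity), ← Real.sqrt_inv]
    exact Real.sq_sqrt (by norm_num)
  rw [hcn]
  have hpar := parallelogram_law_with_norm ℂ a ((starRingEnd ℂ) b)
  have hb2 : ‖(starRingEnd ℂ) b‖ = ‖b‖ := RCLike.norm_conj b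
  rw [hb2] at hpar
  simp only [pow_two]
  linarith

end AuxLpConj

/-- Frame lifting: if `(φₙ)` is a frame for `H = L²_ℂ(X, μ)` with bounds `A ≤ B`, then the
family `Φₙ⁻ = (1/√2)(φₙ, −conj φₙ)`, `Φₙ⁺ = (1/√2)(φₙ, conj φₙ)` is a frame for the Hilbert
direct sum `H ⊕ H` with the same bounds. -/
theorem lifted_frame {X : Type*} [MeasurableSpace X] (μ : Measure X)
    (φ : ℕ → Lp ℂ 2 μ) (A B : ℝ) (hA : 0 < A) (hAB : A ≤ B)
    (hframe : ∀ f : Lp ℂ 2 μ,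
      Summable (fun n => ‖(inner ℂ (φ n) f : ℂ)‖ ^ 2) ∧
      A * ‖f‖ ^ 2 ≤ ∑' n : ℕ, ‖(inner ℂ (φ n) f : ℂ)‖ ^ 2 ∧
      ∑' n : ℕ, ‖(inner ℂ (φ n) f : ℂ)‖ ^ 2 ≤ B * ‖f‖ ^ 2)
    (Φminus Φplus : ℕ → WithLp 2 (Lp ℂ 2 μ × Lp ℂ 2 μ))
    (hΦminus : ∀ n : ℕ, Φminus n =
      (Real.sqrt 2)⁻¹ • (WithLp.equiv 2 (Lp ℂ 2 μ × Lp ℂ 2 μ)).symm (φ n, -lpConj (φ n)))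
    (hΦplus : ∀ n : ℕ, Φplus n =
      (Real.sqrt 2)⁻¹ • (WithLp.equiv 2 (Lp ℂ 2 μ × Lp ℂ 2 μ)).symm (φ n, lpConj (φ n))) :
    ∀ f₁ f₂ : Lp ℂ 2 μ,
      Summable (fun n =>
        ‖(inner ℂ (Φminus n) ((WithLp.equiv 2 (Lp ℂ 2 μ × Lp ℂ 2 μ)).symm (f₁, f₂)) : ℂ)‖ ^ 2 +
        ‖(inner ℂ (Φplus n) ((WithLp.equiv 2 (Lp ℂ 2 μ × Lp ℂ 2 μ)).symm (f₁, f₂)) : ℂ)‖ ^ 2) ∧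
      A * (‖f₁‖ ^ 2 + ‖f₂‖ ^ 2) ≤
        ∑' n : ℕ,
          (‖(inner ℂ (Φminus n) ((WithLp.equiv 2 (Lp ℂ 2 μ × Lp ℂ 2 μ)).symm (f₁, f₂)) : ℂ)‖ ^ 2 +
           ‖(inner ℂ (Φplus n) ((WithLp.equiv 2 (Lp ℂ 2 μ × Lp ℂ 2 μ)).symm (f₁, f₂)) : ℂ)‖ ^ 2) ∧
      ∑' n : ℕ,
          (‖(inner ℂ (Φminus n) ((WithLp.equiv 2 (Lp ℂ 2 μ × Lp ℂ 2 μ)).symm (f₁, f₂)) : ℂ)‖ ^ 2 +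
           ‖(inner ℂ (Φplus n) ((WithLp.equiv 2 (Lp ℂ 2 μ × Lp ℂ 2 μ)).symm (f₁, f₂)) : ℂ)‖ ^ 2) ≤
        B * (‖f₁‖ ^ 2 + ‖f₂‖ ^ 2) := by
  intro f₁ f₂
  obtain ⟨hs1, hl1, hu1⟩ := hframe f₁
  obtain ⟨hs2, hl2, hu2⟩ := hframe (lpConj f₂)
  have hg : ‖lpConj f₂‖ = ‖f₂‖ := norm_lpConj f₂
  have hterm : ∀ n : ℕ,
      ‖(inner ℂ (Φminus n) ((WithLp.equiv 2 (Lp ℂ 2 μ × Lp ℂ 2 μ)).symm (f₁, f₂)) : ℂ)‖ ^ 2 +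
      ‖(inner ℂ (Φplus n) ((WithLp.equiv 2 (Lp ℂ 2 μ × Lp ℂ 2 μ)).symm (f₁, f₂)) : ℂ)‖ ^ 2 =
      ‖(inner ℂ (φ n) f₁ : ℂ)‖ ^ 2 + ‖(inner ℂ (φ n) (lpConj f₂) : ℂ)‖ ^ 2 := by
    intro n
    rw [hΦminus n, hΦplus n]
    exact key_term (φ n) f₁ f₂
  refine ⟨(hs1.add hs2).congr fun n => (hterm n).symm, ?_, ?_⟩ <;>
    rw [tsum_congr hterm, Summable.tsum_add hs1 hs2, mul_add, ← hg]
  · exact add_le_add hl1 hl2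
  · exact add_le_add hu1 hu2
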